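/- Let G = (G₀,…,G_{d−1}) : {0,1}^ℓ → [m]^d be an ε-PRG for combinatorial rectangles in [m]^d. Fix indices i₀,…,i_{d'−1} ∈ [d] (d' arbitrary, indices distinct) and moduli m₀,…,m_{d'−1} ≤ m, and define G'_j(x) = G_{i_j}(x) mod m_j. Then G' is an (ε + Σ_{j∈[d']} m_j/m)-PRG for combinatorial rectangles in ∏_{j∈[d']} [m_j]. -/

import Mathlib

open Finset

theorem count_upper (m k x : ℕ) (hk : 0 < k) :
    ((Finset.range m).filter (fun v => v % k = x)).card ≤ m / k + 1 := by
  have : ((Finset.range m).filter (fun v => v % k = x)).card ≤ (Finset.range (m / k + 1)).card := by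
    apply Finset.card_le_card_of_injOn (fun v => v / k)
    · intro v hv
      simp only [Finset.mem_coe, mem_filter, mem_range] at hv ⊢
      have := Nat.div_le_div_right (c := k) (Nat.le_of_lt_succ (Nat.lt_succ_of_lt hv.1))
      omega
    · intro a ha b hb hab
      simp only [coe_filter, Set.mem_setOf_eq, mem_range] at ha hb
      have hab' : a / k = b / k := hab
      have ha2 : a % k = x := ha.2
      have hb2 : b % k = x := hb.2
      have e1 : a = k * (a / k) + a % k := (Nat.div_add_mod a k).symm
      rw [hab', ha2] at e1
      have e2 : b = k * (b / k) + b % k := (Nat.div_add_mod b k).symm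
      rw [hb2] at e2
      omega
  simpa using this

theorem count_lower (m k x : ℕ) (hk : 0 < k) (hx : x < k) :
    m / k ≤ ((Finset.range m).filter (fun v => v % k = x)).card := by
  have : (Finset.range (m / k)).card ≤ ((Finset.range m).filter (fun v => v % k = x)).card := by
    apply Finset.card_le_card_of_injOn (fun q => q * k + x)
    · intro q hq
      simp only [Finset.mem_coe, mem_range] at hq
      simp only [Finset.mem_coe, mem_filter, mem_range]
      constructor
      · have h1 : (q + 1) * k ≤ (m / k) * k := Nat.mul_le_mul_right k hq
        have h2 := Nat.div_mul_le_self m k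
        nlinarith
      · rw [Nat.mul_comm, Nat.mul_add_mod, Nat.mod_eq_of_lt hx]
    · intro a _ b _ hab
      have hab' : a * k + x = b * k + x := hab
      have : a * k = b * k := by omega
      exact Nat.eq_of_mul_eq_mul_right hk this
  simpa using this

theorem fin_filter_card (m : ℕ) (P : ℕ → Prop) [DecidablePred P] :
    ((Finset.univ : Finset (Fin m)).filter (fun v => P v.val)).card
      = ((Finset.range m).filter P).card := by
  rw [← Nat.Iio_eq_range, ← Fin.map_valEmbedding_univ, Finset.filter_map,
    Finset.card_map]
  rfl

theorem count_mem (m k : ℕ) (hk : 0 < k) (b : Finset ℕ) (hb : ∀ x ∈ b, x < k) :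
    b.card * (m / k) ≤ ((Finset.range m).filter (fun v => v % k ∈ b)).card ∧
    ((Finset.range m).filter (fun v => v % k ∈ b)).card ≤ b.card * (m / k + 1) := by
  have key : ((Finset.range m).filter (fun v => v % k ∈ b)).card
      = ∑ x ∈ b, ((Finset.range m).filter (fun v => v % k = x)).card := by
    rw [Finset.card_eq_sum_card_fiberwise (f := fun v => v % k) (t := b)
      (s := (Finset.range m).filter (fun v => v % k ∈ b))
      (fun v hv => (Finset.mem_filter.mp (Finset.mem_coe.mp hv)).2)]
    apply Finset.sum_congr rfl
    intro x hx
    congr 1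
    rw [Finset.filter_filter]
    apply Finset.filter_congr
    intro v _
    simp only [and_iff_right_iff_imp]
    intro h; rw [h]; exact hx
  rw [key]
  constructor
  · have := Finset.card_nsmul_le_sum b
      (fun x => ((Finset.range m).filter (fun v => v % k = x)).card) (m / k)
      (fun x hx => count_lower m k x hk (hb x hx))
    simpa [smul_eq_mul] using this
  · have := Finset.sum_le_card_nsmul b
      (fun x => ((Finset.range m).filter (fun v => v % k = x)).card) (m / k + 1)
      (fun x hx => count_upper m k x hk)
    simpa [smul_eq_mul] using this

theorem coord_bound (m k bc c : ℕ) (hm : 0 < m) (hk : 0 < k) (hkm : k ≤ m) (hbc : bc ≤ k)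
    (h1 : bc * (m / k) ≤ c) (h2 : c ≤ bc * (m / k + 1)) :
    |(c : ℝ) / m - (bc : ℝ) / k| ≤ (k : ℝ) / m := by
  have hm0 : (0:ℝ) < m := by exact_mod_cast hm
  have hk0 : (0:ℝ) < k := by exact_mod_cast hk
  have hq1' : ((m / k : ℕ) : ℝ) * k ≤ m := by exact_mod_cast Nat.div_mul_le_self m k
  have hdm : (k:ℝ) * ((m / k : ℕ) : ℝ) + ((m % k : ℕ) : ℝ) = m := by
    exact_mod_cast Nat.div_add_mod m k
  have hmod : ((m % k : ℕ) : ℝ) < k := by exact_mod_cast Nat.mod_lt m hk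
  have hq2' : (m : ℝ) < ((m / k : ℕ) : ℝ) * k + k := by nlinarith
  have h1' : (bc : ℝ) * ((m / k : ℕ) : ℝ) ≤ c := by exact_mod_cast h1
  have h2' : (c : ℝ) ≤ (bc : ℝ) * (((m / k : ℕ) : ℝ) + 1) := by exact_mod_cast h2
  have hbc' : (bc : ℝ) ≤ k := by exact_mod_cast hbc
  have hbc0 : (0:ℝ) ≤ bc := by positivity
  have hq0 : (0:ℝ) ≤ ((m / k : ℕ) : ℝ) := by positivity
  have s1 : (c:ℝ) * k ≤ bc * m + bc * k := by
    nlinarith [mul_le_mul_of_nonneg_right h2' hk0.le, mul_le_mul_of_nonneg_left hq1' hbc0]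
  have s2 : (bc:ℝ) * m ≤ c * k + bc * k := by
    nlinarith [mul_le_mul_of_nonneg_right h1' hk0.le, mul_le_mul_of_nonneg_left hq2'.le hbc0]
  have s3 : (bc:ℝ) * k ≤ k * k := mul_le_mul_of_nonneg_right hbc' hk0.le
  rw [abs_sub_le_iff]
  constructor
  · rw [div_sub_div _ _ hm0.ne' hk0.ne', div_le_div_iff₀ (by positivity) hm0]
    nlinarith [mul_le_mul_of_nonneg_right s1 hm0.le, mul_le_mul_of_nonneg_right s3 hm0.le]
  · rw [div_sub_div _ _ hk0.ne' hm0.ne', div_le_div_iff₀ (by positivity) hm0]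
    nlinarith [mul_le_mul_of_nonneg_right s2 hm0.le, mul_le_mul_of_nonneg_right s3 hm0.le]

theorem prod_sub_prod_abs_le {α : Type*} (s : Finset α) (f g : α → ℝ)
    (hf0 : ∀ x ∈ s, 0 ≤ f x) (hf1 : ∀ x ∈ s, f x ≤ 1)
    (hg0 : ∀ x ∈ s, 0 ≤ g x) (hg1 : ∀ x ∈ s, g x ≤ 1) :
    |∏ x ∈ s, f x - ∏ x ∈ s, g x| ≤ ∑ x ∈ s, |f x - g x| := by
  classical
  induction s using Finset.induction_on with
  | empty => simp
  | @insert a s ha ih =>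
    rw [Finset.prod_insert ha, Finset.prod_insert ha, Finset.sum_insert ha]
    have hfm : ∀ x ∈ s, 0 ≤ f x := fun x hx => hf0 x (Finset.mem_insert_of_mem hx)
    have hfM : ∀ x ∈ s, f x ≤ 1 := fun x hx => hf1 x (Finset.mem_insert_of_mem hx)
    have hgm : ∀ x ∈ s, 0 ≤ g x := fun x hx => hg0 x (Finset.mem_insert_of_mem hx)
    have hgM : ∀ x ∈ s, g x ≤ 1 := fun x hx => hg1 x (Finset.mem_insert_of_mem hx)
    have ih' := ih hfm hfM hgm hgM
    have hfa0 := hf0 a (Finset.mem_insert_self a s)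
    have hfa1 := hf1 a (Finset.mem_insert_self a s)
    have hg01 : 0 ≤ ∏ x ∈ s, g x := Finset.prod_nonneg hgm
    have hg11 : ∏ x ∈ s, g x ≤ 1 := Finset.prod_le_one hgm hgM
    calc |f a * ∏ x ∈ s, f x - g a * ∏ x ∈ s, g x|
        = |f a * (∏ x ∈ s, f x - ∏ x ∈ s, g x) + (f a - g a) * ∏ x ∈ s, g x| := by ring_nf
      _ ≤ |f a * (∏ x ∈ s, f x - ∏ x ∈ s, g x)| + |(f a - g a) * ∏ x ∈ s, g x| := abs_add_le _ _
      _ ≤ |∏ x ∈ s, f x - ∏ x ∈ s, g x| + |f a - g a| := by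
          have hfa : |f a| ≤ 1 := abs_le.mpr ⟨by linarith, hfa1⟩
          have hgp : |∏ x ∈ s, g x| ≤ 1 := abs_le.mpr ⟨by linarith, hg11⟩
          have A : |f a * (∏ x ∈ s, f x - ∏ x ∈ s, g x)| ≤ |∏ x ∈ s, f x - ∏ x ∈ s, g x| := by
            rw [abs_mul]; exact mul_le_of_le_one_left (abs_nonneg _) hfa
          have Bb : |(f a - g a) * ∏ x ∈ s, g x| ≤ |f a - g a| := by
            rw [abs_mul]; exact mul_le_of_le_one_right (abs_nonneg _) hgp
          linarith
      _ ≤ |f a - g a| + ∑ x ∈ s, |f x - g x| := by linarith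





/-- Reducing an `ε`-PRG for combinatorial rectangles in `[m]^d` modulo
`m_j ≤ m` along distinct coordinates `i_0,…,i_{d'−1}` yields an
`(ε + Σ_j m_j/m)`-PRG for combinatorial rectangles in `∏_j [m_j]`. -/
theorem rectanglePRG_mod {ℓ d d' m : ℕ} (hm : 0 < m)
    (G : Fin d → (Fin ℓ → Bool) → Fin m) (ε : ℝ)
    (hPRG : ∀ A : Fin d → Finset (Fin m),
      |((Finset.univ.filter
            (fun s : Fin ℓ → Bool => ∀ i, G i s ∈ A i)).card : ℝ) / 2 ^ ℓ
          - ∏ i, ((A i).card : ℝ) / m| ≤ ε)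
    (ι : Fin d' → Fin d) (hι : Function.Injective ι)
    (mi : Fin d' → ℕ) (hmi : ∀ j, 1 ≤ mi j) (hmi' : ∀ j, mi j ≤ m)
    (B : Fin d' → Finset ℕ) (hB : ∀ j, ∀ x ∈ B j, x < mi j) :
    |((Finset.univ.filter (fun s : Fin ℓ → Bool =>
          ∀ j, (G (ι j) s).val % mi j ∈ B j)).card : ℝ) / 2 ^ ℓ
        - ∏ j, ((B j).card : ℝ) / (mi j)| ≤ ε + ∑ j, (mi j : ℝ) / m := by
  classical
  have hm0 : (0:ℝ) < m := by exact_mod_cast hm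
  set A : Fin d → Finset (Fin m) :=
    fun i => Finset.univ.filter (fun v : Fin m => ∀ j, ι j = i → v.val % mi j ∈ B j) with hA
  -- the two filters agree
  have hfilter : (Finset.univ.filter (fun s : Fin ℓ → Bool => ∀ i, G i s ∈ A i))
      = (Finset.univ.filter (fun s : Fin ℓ → Bool => ∀ j, (G (ι j) s).val % mi j ∈ B j)) := by
    apply Finset.filter_congr
    intro s _
    simp only [hA, Finset.mem_filter, Finset.mem_univ, true_and]
    constructor
    · intro h j; exact h (ι j) j rfl
    · intro h i j hji; subst hji; exact h j
  -- A on the image of ι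
  have hAι : ∀ j, A (ι j)
      = Finset.univ.filter (fun v : Fin m => v.val % mi j ∈ B j) := by
    intro j
    apply Finset.filter_congr
    intro v _
    constructor
    · intro h; exact h j rfl
    · intro h j' hj'; rw [hι hj']; exact h
  -- A off the image of ι
  have hAout : ∀ i : Fin d, (∀ j, ι j ≠ i) → A i = Finset.univ := by
    intro i hi
    apply Finset.filter_true_of_mem
    intro v _ j hj
    exact absurd hj (hi j)
  -- reindex the product
  have hprod : ∏ i, ((A i).card : ℝ) / m = ∏ j, ((A (ι j)).card : ℝ) / m := by
    rw [← Finset.prod_image (f := fun i => ((A i).card : ℝ) / m)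
      (g := ι) (fun a _ b _ h => hι h)]
    symm
    apply Finset.prod_subset (Finset.subset_univ _)
    intro i _ hi
    have : ∀ j, ι j ≠ i := by
      intro j hj
      exact hi (Finset.mem_image.mpr ⟨j, Finset.mem_univ j, hj⟩)
    rw [hAout i this]
    rw [Finset.card_univ, Fintype.card_fin]
    field_simp
  -- per-coordinate bound
  have hcoord : ∀ j, |((A (ι j)).card : ℝ) / m - ((B j).card : ℝ) / mi j| ≤ (mi j : ℝ) / m := by
    intro j
    rw [hAι j]
    have hcard : (Finset.univ.filter (fun v : Fin m => v.val % mi j ∈ B j)).card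
        = ((Finset.range m).filter (fun v => v % mi j ∈ B j)).card :=
      fin_filter_card m (fun v => v % mi j ∈ B j)
    rw [hcard]
    have hk : 0 < mi j := hmi j
    obtain ⟨h1, h2⟩ := count_mem m (mi j) hk (B j) (hB j)
    have hbc : (B j).card ≤ mi j := by
      have : B j ⊆ Finset.range (mi j) := fun x hx => Finset.mem_range.mpr (hB j x hx)
      simpa using Finset.card_le_card this
    exact coord_bound m (mi j) (B j).card _ hm hk (hmi' j) hbc h1 h2
  -- product comparison
  have hAcard : ∀ j, ((A (ι j)).card : ℝ) / m ≤ 1 := by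
    intro j
    rw [div_le_one hm0]
    have : (A (ι j)).card ≤ m := by
      simpa using Finset.card_le_card (Finset.subset_univ (A (ι j)))
    exact_mod_cast this
  have hBcard : ∀ j, ((B j).card : ℝ) / mi j ≤ 1 := by
    intro j
    have hk0 : (0:ℝ) < mi j := by exact_mod_cast hmi j
    rw [div_le_one hk0]
    have hbc : (B j).card ≤ mi j := by
      have : B j ⊆ Finset.range (mi j) := fun x hx => Finset.mem_range.mpr (hB j x hx)
      simpa using Finset.card_le_card this
    exact_mod_cast hbc
  have hprodcmp : |∏ j, ((A (ι j)).card : ℝ) / m - ∏ j, ((B j).card : ℝ) / mi j|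
      ≤ ∑ j, (mi j : ℝ) / m := by
    calc |∏ j, ((A (ι j)).card : ℝ) / m - ∏ j, ((B j).card : ℝ) / mi j|
        ≤ ∑ j, |((A (ι j)).card : ℝ) / m - ((B j).card : ℝ) / mi j| :=
          prod_sub_prod_abs_le Finset.univ _ _
            (fun j _ => by positivity) (fun j _ => hAcard j)
            (fun j _ => by positivity)
            (fun j _ => hBcard j)
      _ ≤ ∑ j, (mi j : ℝ) / m := Finset.sum_le_sum (fun j _ => hcoord j)
  -- assemble
  have hP := hPRG A
  rw [hfilter] at hP
  set X := ((Finset.univ.filter (fun s : Fin ℓ → Bool =>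
      ∀ j, (G (ι j) s).val % mi j ∈ B j)).card : ℝ) / 2 ^ ℓ
  calc |X - ∏ j, ((B j).card : ℝ) / mi j|
      = |(X - ∏ i, ((A i).card : ℝ) / m)
          + (∏ j, ((A (ι j)).card : ℝ) / m - ∏ j, ((B j).card : ℝ) / mi j)| := by
        rw [hprod]; congr 1; ring
    _ ≤ |X - ∏ i, ((A i).card : ℝ) / m|
          + |∏ j, ((A (ι j)).card : ℝ) / m - ∏ j, ((B j).card : ℝ) / mi j| := abs_add_le _ _
    _ ≤ ε + ∑ j, (mi j : ℝ) / m := add_le_add hP hprodcmp
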